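/- Let K be a field and q ∈ K with q ≠ 0, and let a weighted graph be the join of weighted graphs T₁,…,T_k with marked vertices v₁,…,v_k: its vertex set is {0} ⊔ V₁ ⊔ … ⊔ V_k (ordered with 0 first, then V₁,…,V_k each with its internal order), where V_j is the vertex set of T_j, vertices in different V_i, V_j are not joined (weight 0), and vertex 0 is joined to each v_j by an edge of weight 1 and to no other vertex. Let T_j(q) be the Coxeter polynomial of T_j, and let T̄_j(q) be the Coxeter polynomial of T_j with the vertex v_j deleted. Then the Coxeter polynomial of the join equals (q + q⁻¹)·∏_{j=1}^k T_j(q) − Σ_{j=1}^k T̄_j(q)·∏_{i ≠ j} T_i(q). -/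

import Mathlib

open Matrix Finset

section Helpers
variable {R : Type*} [CommRing R]

lemma det_updateRow_finset_sum {n : Type*} [DecidableEq n] [Fintype n]
    (M : Matrix n n R) (r : n) {γ : Type*} (s : Finset γ) (f : γ → n → R) :
    (M.updateRow r (∑ c ∈ s, f c)).det = ∑ c ∈ s, (M.updateRow r (f c)).det := by
  classical
  induction s using Finset.induction_on with
  | empty =>
      simp only [Finset.sum_empty]
      exact Matrix.det_eq_zero_of_row_eq_zero r (by simp)
  | insert _ _ h ih =>
      rw [Finset.sum_insert h, Matrix.det_updateRow_add, ih, Finset.sum_insert h]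

lemma det_updateColumn_finset_sum {n : Type*} [DecidableEq n] [Fintype n]
    (M : Matrix n n R) (r : n) {γ : Type*} (s : Finset γ) (f : γ → n → R) :
    (M.updateCol r (∑ c ∈ s, f c)).det = ∑ c ∈ s, (M.updateCol r (f c)).det := by
  classical
  induction s using Finset.induction_on with
  | empty =>
      simp only [Finset.sum_empty]
      exact Matrix.det_eq_zero_of_column_eq_zero r (by simp)
  | insert _ _ h ih =>
      rw [Finset.sum_insert h, Matrix.det_updateCol_add, ih, Finset.sum_insert h]

def blockEquivAux {k : ℕ} {κ : Fin k → Type*} (t : Fin k) :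
    κ t ≃ {a : Σ s, κ s // a.1 = t} where
  toFun y := ⟨⟨t, y⟩, rfl⟩
  invFun a := a.2 ▸ a.1.2
  left_inv y := rfl
  right_inv := by rintro ⟨⟨t', y⟩, rfl⟩; rfl

lemma det_sigma_block {k : ℕ} {κ : Fin k → Type*} [∀ t, Fintype (κ t)]
    [∀ t, DecidableEq (κ t)]
    (D : Matrix (Σ t, κ t) (Σ t, κ t) R) (d : ∀ t, Matrix (κ t) (κ t) R)
    (hdiag : ∀ t x y, D ⟨t, x⟩ ⟨t, y⟩ = d t x y)
    (hoff : ∀ t t' x y, t ≠ t' → D ⟨t, x⟩ ⟨t', y⟩ = 0) :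
    D.det = ∏ t, (d t).det := by
  have hbt : D.BlockTriangular Sigma.fst := by
    rintro ⟨t, x⟩ ⟨t', y⟩ h
    exact hoff t t' x y (ne_of_gt h)
  rw [hbt.det_fintype]
  refine Finset.prod_congr rfl fun t _ => ?_
  rw [← Matrix.det_submatrix_equiv_self (blockEquivAux t) (D.toSquareBlock Sigma.fst t)]
  congr 1
  ext x y
  simp only [Matrix.submatrix_apply, Matrix.toSquareBlock_def, blockEquivAux]
  exact hdiag t x y

lemma det_option_row {ι : Type*} [Fintype ι] [DecidableEq ι]
    (P : Matrix (Option ι) (Option ι) R) (h : ∀ y, P none (some y) = 0) :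
    P.det = P none none * (Matrix.of fun x y : ι => P (some x) (some y)).det := by
  rw [← Matrix.det_submatrix_equiv_self (Equiv.optionEquivSumPUnit ι).symm P]
  have he : P.submatrix (Equiv.optionEquivSumPUnit ι).symm (Equiv.optionEquivSumPUnit ι).symm
      = Matrix.fromBlocks
      (Matrix.of fun x y : ι => P (some x) (some y))
      (Matrix.of fun (x : ι) (_ : Unit) => P (some x) none) 0
      (Matrix.of fun (_ _ : Unit) => P none none) := by
    ext i j
    rcases i with x | u <;> rcases j with y | u' <;>
      simp [Matrix.fromBlocks, h]
  rw [he, Matrix.det_fromBlocks_zero₂₁,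
    show (Matrix.of fun _ _ : Unit => P none none).det = P none none from Matrix.det_unique _]
  exact mul_comm _ _

lemma det_option_col {ι : Type*} [Fintype ι] [DecidableEq ι]
    (P : Matrix (Option ι) (Option ι) R) (h : ∀ x, P (some x) none = 0) :
    P.det = P none none * (Matrix.of fun x y : ι => P (some x) (some y)).det := by
  rw [← Matrix.det_transpose P, det_option_row Pᵀ (fun y => h y)]
  congr 1
  rw [← Matrix.det_transpose]
  rfl

lemma det_updateRow_single_self {n : ℕ} (B : Matrix (Fin (n+1)) (Fin (n+1)) R) (c : Fin (n+1)) :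
    (B.updateRow c (Pi.single c 1)).det = (B.submatrix c.succAbove c.succAbove).det := by
  rw [Matrix.det_succ_row _ c, Finset.sum_eq_single c]
  · have hs : (B.updateRow c (Pi.single c 1)).submatrix c.succAbove c.succAbove
        = B.submatrix c.succAbove c.succAbove := by
      ext x y
      simp [Matrix.updateRow_ne (Fin.succAbove_ne c x)]
    rw [hs]
    have : ((-1 : R)) ^ ((c : ℕ) + (c : ℕ)) = 1 := Even.neg_one_pow ⟨c, rfl⟩
    simp [this]
  · intro b _ hb
    simp [Pi.single_apply, hb]
  · simp

end Helpers

/-- The join formula (3) for Coxeter polynomials.  The join of weighted graphs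
`T₁, …, T_k` (the `j`-th on vertex set `Fin (m j + 1)`, with symmetric weights `a j`
and marked vertex `v j`) has vertex set `Option (Σ j, Fin (m j + 1))` with the extra
vertex `none` coming first in the order, joined to each `v j` by an edge of weight `1`.
`Sb j` is the Seifert matrix of `T_j`, `Mb j = q • Sb j + q⁻¹ • (Sb j)ᵀ`, and `M` is
the corresponding matrix `q • S + q⁻¹ • Sᵀ` of the join, described entrywise.  Then
the Coxeter polynomial `det M` of the join equals
`(q + q⁻¹) * ∏ j, T_j(q) - ∑ j, T̄_j(q) * ∏_{i ≠ j} T_i(q)`, where `T̄_j` is `T_j`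
with the vertex `v j` deleted. -/
theorem coxeter_join_formula {K : Type*} [Field K] (q : K) (hq : q ≠ 0)
    (k : ℕ) (m : Fin k → ℕ)
    (a : ∀ j, Fin (m j + 1) → Fin (m j + 1) → K)
    (hsym : ∀ j x y, a j x y = a j y x)
    (v : ∀ j, Fin (m j + 1))
    (Sb : ∀ j, Matrix (Fin (m j + 1)) (Fin (m j + 1)) K)
    (hSb : ∀ j x y, Sb j x y = if x = y then 1 else if x < y then -a j x y else 0)
    (Mb : ∀ j, Matrix (Fin (m j + 1)) (Fin (m j + 1)) K)
    (hMb : ∀ j, Mb j = q • Sb j + q⁻¹ • (Sb j)ᵀ)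
    (M : Matrix (Option (Σ j, Fin (m j + 1))) (Option (Σ j, Fin (m j + 1))) K)
    (hM00 : M none none = q + q⁻¹)
    (hM0j : ∀ j x, M none (some ⟨j, x⟩) = if x = v j then -q else 0)
    (hMj0 : ∀ j x, M (some ⟨j, x⟩) none = if x = v j then -q⁻¹ else 0)
    (hMdiag : ∀ j x y, M (some ⟨j, x⟩) (some ⟨j, y⟩) = Mb j x y)
    (hMoff : ∀ j j' x y, j ≠ j' → M (some ⟨j, x⟩) (some ⟨j', y⟩) = 0) :
    M.det = (q + q⁻¹) * ∏ j, (Mb j).det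
      - ∑ j, ((Mb j).submatrix (v j).succAbove (v j).succAbove).det *
          ∏ i ∈ Finset.univ.erase j, (Mb i).det := by
  classical
  -- the inner (block diagonal) matrix
  have hD : (Matrix.of fun x y : Σ j, Fin (m j + 1) => M (some x) (some y)).det
      = ∏ j, (Mb j).det :=
    det_sigma_block _ Mb (fun t x y => hMdiag t x y) (fun t t' x y h => hMoff t t' x y h)
  -- decomposition of the first row
  have hrow : M none = Pi.single none (q + q⁻¹)
      + ∑ j, Pi.single (some ⟨j, v j⟩) (-q) := by
    funext x
    rcases x with _ | ⟨t, y⟩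
    · simp [hM00, Finset.sum_apply, Pi.single_apply]
    · rw [hM0j t y]
      simp only [Pi.add_apply, Finset.sum_apply, Pi.single_apply]
      rw [if_neg (by simp : ¬ (some (⟨t, y⟩ : Σ j, Fin (m j + 1)) = none)), zero_add,
        Finset.sum_eq_single t]
      · simp [Sigma.mk.inj_iff]
      · intro b _ hb
        rw [if_neg]
        simp only [Option.some.injEq, Sigma.mk.inj_iff, not_and]
        intro h; exact absurd h.symm hb
      · simp
  set A : Fin k → Matrix (Option (Σ j, Fin (m j + 1))) (Option (Σ j, Fin (m j + 1))) K :=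
    fun j => M.updateRow none (Pi.single (some ⟨j, v j⟩) (-q)) with hA_def
  have hsplit : M.det
      = (M.updateRow none (Pi.single none (q + q⁻¹))).det + ∑ j, (A j).det := by
    conv_lhs => rw [← M.updateRow_eq_self none, hrow]
    rw [Matrix.det_updateRow_add, det_updateRow_finset_sum]
  -- the first term
  have hA0 : (M.updateRow none (Pi.single none (q + q⁻¹))).det
      = (q + q⁻¹) * ∏ j, (Mb j).det := by
    rw [det_option_row _ (fun y => by simp)]
    have h1 : (M.updateRow none (Pi.single none (q + q⁻¹))) none none = q + q⁻¹ := by simp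
    have h2 : (Matrix.of fun x y : Σ j, Fin (m j + 1) =>
        (M.updateRow none (Pi.single none (q + q⁻¹))) (some x) (some y)).det
        = ∏ j, (Mb j).det := by
      rw [← hD]
      have he : (Matrix.of fun x y : Σ j, Fin (m j + 1) =>
          (M.updateRow none (Pi.single none (q + q⁻¹))) (some x) (some y))
          = (Matrix.of fun x y : Σ j, Fin (m j + 1) => M (some x) (some y)) := by
        ext x y
        simp [Matrix.updateRow_ne (Option.some_ne_none x)]
      rw [he]
    rw [h1, h2]
  -- decomposition of the first column of each `A j`
  set P : Fin k → Fin k → Matrix (Option (Σ j, Fin (m j + 1)))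
      (Option (Σ j, Fin (m j + 1))) K :=
    fun j i => (A j).updateCol none (Pi.single (some ⟨i, v i⟩) (-q⁻¹)) with hP_def
  have hcol : ∀ j, (fun x => A j x none)
      = Pi.single none (0 : K) + ∑ i, Pi.single (some ⟨i, v i⟩) (-q⁻¹) := by
    intro j
    funext x
    rcases x with _ | ⟨t, y⟩
    · simp [hA_def, Finset.sum_apply, Pi.single_apply]
    · rw [show A j (some ⟨t, y⟩) none = M (some ⟨t, y⟩) none from by
        simp [hA_def, Matrix.updateRow_ne (Option.some_ne_none _)], hMj0 t y]
      simp only [Pi.add_apply, Finset.sum_apply, Pi.single_apply]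
      rw [if_neg (by simp : ¬ (some (⟨t, y⟩ : Σ j, Fin (m j + 1)) = none)), zero_add,
        Finset.sum_eq_single t]
      · simp [Sigma.mk.inj_iff]
      · intro b _ hb
        rw [if_neg]
        simp only [Option.some.injEq, Sigma.mk.inj_iff, not_and]
        intro h; exact absurd h.symm hb
      · simp
  have hBj : ∀ j, (A j).det = ∑ i, (P j i).det := by
    intro j
    conv_lhs => rw [← (A j).updateCol_eq_self none, hcol j]
    rw [Matrix.det_updateCol_add, det_updateColumn_finset_sum]
    have : ((A j).updateCol none (Pi.single none (0:K))).det = 0 := by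
      apply Matrix.det_eq_zero_of_column_eq_zero none
      intro x
      rcases x with _ | s <;> simp [Matrix.updateCol_self]
    rw [this, zero_add]
  -- entry facts for P
  have hP3 : ∀ j i, P j i none none = 0 := by
    intro j i; simp [hP_def, Matrix.updateCol_self]
  have hP2 : ∀ j i (s : Σ j, Fin (m j + 1)), P j i none (some s)
      = if s = ⟨j, v j⟩ then -q else 0 := by
    intro j i s
    simp [hP_def, hA_def, Matrix.updateCol_ne (Option.some_ne_none s), Pi.single_apply]
  have hP1 : ∀ j i (s : Σ j, Fin (m j + 1)), P j i (some s) none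
      = if s = ⟨i, v i⟩ then -q⁻¹ else 0 := by
    intro j i s; simp [hP_def, Matrix.updateCol_self, Pi.single_apply]
  have hP4 : ∀ j i x y, P j i (some x) (some y) = M (some x) (some y) := by
    intro j i x y
    simp [hP_def, hA_def, Matrix.updateCol_ne (Option.some_ne_none y),
      Matrix.updateRow_ne (Option.some_ne_none x)]
  -- off-diagonal terms vanish
  have hPoff : ∀ j i, i ≠ j → (P j i).det = 0 := by
    intro j i hij
    have hB0 : ((Mb i).updateRow (v i) 0).det = 0 :=
      Matrix.det_eq_zero_of_row_eq_zero (v i) (by simp)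
    obtain ⟨w, hw0, hww⟩ := (Matrix.exists_mulVec_eq_zero_iff).mpr hB0
    rw [← Matrix.exists_mulVec_eq_zero_iff]
    set W : Option (Σ j, Fin (m j + 1)) → K := fun x => Option.elim x
      (q * ((Mb i) *ᵥ w) (v i))
      (fun s => if h : s.1 = i then w (Fin.cast (congrArg (fun t => m t + 1) h) s.2) else 0)
      with hW_def
    have hWnone : W none = q * ((Mb i) *ᵥ w) (v i) := rfl
    have hWsome : ∀ t (y : Fin (m t + 1)), W (some ⟨t, y⟩)
        = if h : t = i then w (Fin.cast (congrArg (fun t => m t + 1) h) y) else 0 :=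
      fun _ _ => rfl
    have hWoff : ∀ t (y : Fin (m t + 1)), t ≠ i → W (some ⟨t, y⟩) = 0 := by
      intro t y ht; rw [hWsome, dif_neg ht]
    have hWi : ∀ y : Fin (m i + 1), W (some ⟨i, y⟩) = w y := by
      intro y; rw [hWsome, dif_pos rfl]
      congr 1 <;> first | exact Fin.ext rfl | rfl
    refine ⟨W, ?_, ?_⟩
    · obtain ⟨z, hz⟩ := Function.ne_iff.mp hw0
      exact Function.ne_iff.mpr ⟨some ⟨i, z⟩, by rw [hWi]; simpa using hz⟩
    · funext x
      have hx : (P j i *ᵥ W) x = ∑ y, P j i x y * W y := rfl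
      rcases x with _ | ⟨t, y⟩
      · rw [hx, Fintype.sum_option, hP3, zero_mul, zero_add, Pi.zero_apply]
        refine Finset.sum_eq_zero fun s _ => ?_
        by_cases hs : s = ⟨j, v j⟩
        · subst hs
          rw [hP2, if_pos rfl, hWoff j (v j) (Ne.symm hij), mul_zero]
        · rw [hP2, if_neg hs, zero_mul]
      · rw [hx, Fintype.sum_option, Pi.zero_apply, hP1]
        have hsigma : (∑ s : Σ j, Fin (m j + 1), P j i (some ⟨t, y⟩) (some s) * W (some s))
            = ∑ t' : Fin k, ∑ z : Fin (m t' + 1),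
              P j i (some ⟨t, y⟩) (some ⟨t', z⟩) * W (some ⟨t', z⟩) := by
          rw [← Finset.univ_sigma_univ, Finset.sum_sigma]
        rw [hsigma]
        by_cases ht : t = i
        · subst ht
          have hinner : (∑ t' : Fin k, ∑ z : Fin (m t' + 1),
              P j t (some ⟨t, y⟩) (some ⟨t', z⟩) * W (some ⟨t', z⟩))
              = ∑ z, Mb t y z * w z := by
            rw [Finset.sum_eq_single t]
            · refine Finset.sum_congr rfl fun z _ => ?_
              rw [hP4, hMdiag, hWi]
            · intro b _ hb
              refine Finset.sum_eq_zero fun z _ => ?_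
              rw [hWoff b z hb, mul_zero]
            · simp
          rw [hinner]
          by_cases hy : y = v t
          · subst hy
            rw [if_pos rfl, hWnone]
            have hX : (∑ z, Mb t (v t) z * w z) = ((Mb t) *ᵥ w) (v t) := rfl
            rw [hX]
            field_simp
            ring
          · rw [if_neg (by simp [Sigma.mk.inj_iff, hy]), zero_mul, zero_add]
            have : (∑ z, Mb t y z * w z) = (((Mb t).updateRow (v t) 0) *ᵥ w) y := by
              refine (Finset.sum_congr rfl fun z _ => ?_).trans rfl
              rw [Matrix.updateRow_ne hy]
            rw [this, hww, Pi.zero_apply]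
        · rw [if_neg (fun h => ht (congrArg Sigma.fst h)), zero_mul, zero_add]
          refine Finset.sum_eq_zero fun t' _ => Finset.sum_eq_zero fun z _ => ?_
          by_cases ht' : t' = i
          · subst ht'
            rw [hP4, hMoff t t' y z ht, zero_mul]
          · rw [hWoff t' z ht', mul_zero]
  -- diagonal terms
  have hPjj : ∀ j, (P j j).det
      = -(((Mb j).submatrix (v j).succAbove (v j).succAbove).det *
          ∏ t ∈ Finset.univ.erase j, (Mb t).det) := by
    intro j
    set σ : Equiv.Perm (Option (Σ j, Fin (m j + 1))) := Equiv.swap none (some ⟨j, v j⟩) with hσ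
    set Q := (P j j).submatrix σ id with hQdef
    have hdetPQ : (P j j).det = -Q.det := by
      have h1 : Q.det = -(P j j).det := by
        rw [hQdef, Matrix.det_permute, hσ, Equiv.Perm.sign_swap (by simp)]
        simp
      rw [h1, neg_neg]
    have hQcol : ∀ x : Σ j, Fin (m j + 1), Q (some x) none = 0 := by
      intro x
      by_cases hxx : x = ⟨j, v j⟩
      · subst hxx
        show P j j (σ (some ⟨j, v j⟩)) none = 0
        rw [hσ, Equiv.swap_apply_right]
        exact hP3 j j
      · show P j j (σ (some x)) none = 0
        rw [hσ, Equiv.swap_apply_of_ne_of_ne (by simp) (by simpa using hxx), hP1, if_neg hxx]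
    have hQ00 : Q none none = -q⁻¹ := by
      show P j j (σ none) none = -q⁻¹
      rw [hσ, Equiv.swap_apply_left, hP1, if_pos rfl]
    set d : ∀ t, Matrix (Fin (m t + 1)) (Fin (m t + 1)) K :=
      fun t => if h : t = j then (Mb t).updateRow (v t) (Pi.single (v t) (-q)) else Mb t
      with hd
    have hE : (Matrix.of fun x y : Σ j, Fin (m j + 1) => Q (some x) (some y)).det
        = ∏ t, (d t).det := by
      apply det_sigma_block
      · intro t x y
        show Q (some ⟨t, x⟩) (some ⟨t, y⟩) = d t x y
        by_cases ht : t = j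
        · subst ht
          by_cases hx : x = v t
          · subst hx
            show P t t (σ (some ⟨t, v t⟩)) (some ⟨t, y⟩) = d t (v t) y
            rw [hσ, Equiv.swap_apply_right, hP2]
            simp [hd, Matrix.updateRow_self, Pi.single_apply, Sigma.mk.inj_iff]
          · show P t t (σ (some ⟨t, x⟩)) (some ⟨t, y⟩) = d t x y
            rw [hσ, Equiv.swap_apply_of_ne_of_ne (by simp)
              (by simpa [Sigma.mk.inj_iff] using hx), hP4, hMdiag]
            simp [hd, Matrix.updateRow_ne hx]
        · show P j j (σ (some ⟨t, x⟩)) (some ⟨t, y⟩) = d t x y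
          rw [hσ, Equiv.swap_apply_of_ne_of_ne (by simp)
            (by simp [Sigma.mk.inj_iff, ht]), hP4, hMdiag]
          simp only [hd]
          rw [dif_neg ht]
      · intro t t' x y htt
        show Q (some ⟨t, x⟩) (some ⟨t', y⟩) = 0
        by_cases h1 : (⟨t, x⟩ : Σ j, Fin (m j + 1)) = ⟨j, v j⟩
        · have ht'j : t' ≠ j := by
            intro h
            exact htt (((congrArg Sigma.fst h1).trans h.symm))
          show P j j (σ (some ⟨t, x⟩)) (some ⟨t', y⟩) = 0
          rw [hσ, h1, Equiv.swap_apply_right, hP2,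
            if_neg (fun h => ht'j (congrArg Sigma.fst h))]
        · show P j j (σ (some ⟨t, x⟩)) (some ⟨t', y⟩) = 0
          rw [hσ, Equiv.swap_apply_of_ne_of_ne (by simp) (by simpa using h1), hP4]
          exact hMoff t t' x y htt
    have hdj : (d j).det = -q * ((Mb j).submatrix (v j).succAbove (v j).succAbove).det := by
      simp only [hd]
      rw [dif_pos trivial]
      have hsingle : Pi.single (M := fun _ : Fin (m j + 1) => K) (v j) (-q)
          = (-q) • Pi.single (M := fun _ : Fin (m j + 1) => K) (v j) 1 := by
        funext z
        simp [Pi.single_apply, mul_ite]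
      rw [hsingle, Matrix.det_updateRow_smul, det_updateRow_single_self]
    have hprod : ∏ t, (d t).det
        = (d j).det * ∏ t ∈ Finset.univ.erase j, (Mb t).det := by
      rw [← Finset.mul_prod_erase Finset.univ _ (Finset.mem_univ j)]
      congr 1
      refine Finset.prod_congr rfl fun t ht => ?_
      simp only [hd]
      rw [dif_neg (Finset.ne_of_mem_erase ht)]
    rw [hdetPQ, det_option_col Q hQcol, hQ00, hE, hprod, hdj]
    have hc : -q⁻¹ * ((-q * ((Mb j).submatrix (v j).succAbove (v j).succAbove).det) *
        ∏ t ∈ Finset.univ.erase j, (Mb t).det)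
        = (q⁻¹ * q) * (((Mb j).submatrix (v j).succAbove (v j).succAbove).det *
          ∏ t ∈ Finset.univ.erase j, (Mb t).det) := by ring
    rw [hc, inv_mul_cancel₀ hq, one_mul]
  -- final assembly
  rw [hsplit, hA0]
  have hsum : (∑ j, (A j).det)
      = -∑ j, ((Mb j).submatrix (v j).succAbove (v j).succAbove).det *
          ∏ i ∈ Finset.univ.erase j, (Mb i).det := by
    rw [← Finset.sum_neg_distrib]
    refine Finset.sum_congr rfl fun j _ => ?_
    rw [hBj j, Finset.sum_eq_single j (fun i _ hi => hPoff j i hi) (by simp), hPjj j]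
  rw [hsum]
  ring
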